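/- In sl(3,ℝ) with Lie bialgebra structure given by the r-matrix π = E₁₂∧E₂₁ + E₁₃∧E₃₁ + E₂₃∧E₃₂, the annihilator h° of the coisotropic subalgebra h = span{E₁₂, E₁₃, E₂₃, H₁-H₃} is a Lie subalgebra of g* (with bracket dual to δ = [π,·]) but is not a Lie ideal of g*. -/

import Mathlib

open ExteriorAlgebra

attribute [local instance 100] LieRing.ofAssociativeRing

/-- Auxiliary data packaging the Schouten bracket operations on the exterior algebra
`⋀• g` of a Lie algebra `g`, characterized by their values on decomposable elements:
* `bv X` is the Schouten bracket `[X, ·]` with an element of `g`, i.e. the unique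
  derivation of `⋀• g` extending `ad X`;
* `sb` is the Schouten bracket `[·,·] : ⋀² g × ⋀² g → ⋀³ g`;
* `pair ξ η` is the pairing of `ξ ∧ η ∈ ⋀² g*` with `⋀² g`;
* `sharp η ξ = ι_ξ η` is contraction of `η ∈ ⋀² g` with a covector `ξ`. -/
structure SchoutenData (R : Type*) [Field R] (L : Type*) [LieRing L] [LieAlgebra R L] where
  bv : L →ₗ[R] ExteriorAlgebra R L →ₗ[R] ExteriorAlgebra R L
  sb : ExteriorAlgebra R L →ₗ[R] ExteriorAlgebra R L →ₗ[R] ExteriorAlgebra R L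
  pair : Module.Dual R L →ₗ[R] Module.Dual R L →ₗ[R] ExteriorAlgebra R L →ₗ[R] R
  sharp : ExteriorAlgebra R L →ₗ[R] Module.Dual R L →ₗ[R] L
  bv_wedge2 : ∀ X u v : L, bv X (ιMulti R 2 ![u, v]) =
    ιMulti R 2 ![⁅X, u⁆, v] + ιMulti R 2 ![u, ⁅X, v⁆]
  bv_wedge3 : ∀ X u v t : L, bv X (ιMulti R 3 ![u, v, t]) =
    ιMulti R 3 ![⁅X, u⁆, v, t] + ιMulti R 3 ![u, ⁅X, v⁆, t] + ιMulti R 3 ![u, v, ⁅X, t⁆]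
  sb_wedge : ∀ u v x y : L, sb (ιMulti R 2 ![u, v]) (ιMulti R 2 ![x, y]) =
    ιMulti R 3 ![⁅u, x⁆, v, y] + ιMulti R 3 ![u, ⁅v, x⁆, y]
      - ιMulti R 3 ![x, ⁅u, y⁆, v] - ιMulti R 3 ![x, u, ⁅v, y⁆]
  pair_wedge : ∀ (ξ η : Module.Dual R L) (u v : L),
    pair ξ η (ιMulti R 2 ![u, v]) = ξ u * η v - ξ v * η u
  sharp_wedge : ∀ (u v : L) (ξ : Module.Dual R L),
    sharp (ιMulti R 2 ![u, v]) ξ = ξ u • v - ξ v • u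

noncomputable def entryDual (i j : Fin 3) : Module.Dual ℝ (Matrix (Fin 3) (Fin 3) ℝ) :=
{ toFun := fun A => A i j, map_add' := fun _ _ => rfl, map_smul' := fun _ _ => rfl }

noncomputable abbrev Eaux : Fin 3 → Fin 3 → Matrix (Fin 3) (Fin 3) ℝ :=
  fun p q => Matrix.single p q 1

noncomputable abbrev πaux : ExteriorAlgebra ℝ (Matrix (Fin 3) (Fin 3) ℝ) :=
  ιMulti ℝ 2 ![Eaux 0 1, Eaux 1 0] + ιMulti ℝ 2 ![Eaux 0 2, Eaux 2 0] + ιMulti ℝ 2 ![Eaux 1 2, Eaux 2 1]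

noncomputable abbrev haux : Submodule ℝ (Matrix (Fin 3) (Fin 3) ℝ) :=
  Submodule.span ℝ {Eaux 0 1, Eaux 0 2, Eaux 1 2, Eaux 0 0 - Eaux 2 2}


/-- In `sl(3,ℝ)` with the Lie bialgebra structure given by the r-matrix
`π = E₁₂∧E₂₁ + E₁₃∧E₃₁ + E₂₃∧E₃₂` (cobracket `δ(X)=[π,X]`, bracket on `g*` given by
`⟨[ξ,η],X⟩ = ⟨ξ∧η, δ(X)⟩`), the annihilator `h°` of the coisotropic subalgebra
`h = span{E₁₂, E₁₃, E₂₃, H₁-H₃}` is a Lie subalgebra of `g*` (first conjunct) but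
not a Lie ideal of `g*` (second conjunct: some bracket of an arbitrary `η ∈ g*` with
some `ξ ∈ h°` fails to annihilate `h`). -/
theorem sl3_annihilator_subalgebra_not_ideal
    (S : SchoutenData ℝ (Matrix (Fin 3) (Fin 3) ℝ)) :
    letI E : Fin 3 → Fin 3 → Matrix (Fin 3) (Fin 3) ℝ :=
      fun p q => Matrix.single p q 1
    letI π : ExteriorAlgebra ℝ (Matrix (Fin 3) (Fin 3) ℝ) :=
      ιMulti ℝ 2 ![E 0 1, E 1 0] + ιMulti ℝ 2 ![E 0 2, E 2 0] + ιMulti ℝ 2 ![E 1 2, E 2 1]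
    letI h : Submodule ℝ (Matrix (Fin 3) (Fin 3) ℝ) :=
      Submodule.span ℝ {E 0 1, E 0 2, E 1 2, E 0 0 - E 2 2}
    (∀ ξ η : Module.Dual ℝ (Matrix (Fin 3) (Fin 3) ℝ),
        (∀ x ∈ h, ξ x = 0) → (∀ x ∈ h, η x = 0) →
        ∀ x ∈ h, S.pair ξ η (S.bv x π) = 0) ∧
      (∃ η ξ : Module.Dual ℝ (Matrix (Fin 3) (Fin 3) ℝ),
        (∀ x ∈ h, ξ x = 0) ∧ ∃ x ∈ h, S.pair η ξ (S.bv x π) ≠ 0) := by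
  show
    (∀ ξ η : Module.Dual ℝ (Matrix (Fin 3) (Fin 3) ℝ),
        (∀ x ∈ haux, ξ x = 0) → (∀ x ∈ haux, η x = 0) →
        ∀ x ∈ haux, S.pair ξ η (S.bv x πaux) = 0) ∧
      (∃ η ξ : Module.Dual ℝ (Matrix (Fin 3) (Fin 3) ℝ),
        (∀ x ∈ haux, ξ x = 0) ∧ ∃ x ∈ haux, S.pair η ξ (S.bv x πaux) ≠ 0)
  have hEdef : Eaux = fun p q => Matrix.single p q 1 := rfl
  have hπ : πaux = ιMulti ℝ 2 ![Eaux 0 1, Eaux 1 0] + ιMulti ℝ 2 ![Eaux 0 2, Eaux 2 0]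
      + ιMulti ℝ 2 ![Eaux 1 2, Eaux 2 1] := rfl
  -- membership of the generators
  have m1 : Eaux 0 1 ∈ haux := Submodule.subset_span (by simp)
  have m2 : Eaux 0 2 ∈ haux := Submodule.subset_span (by simp)
  have m3 : Eaux 1 2 ∈ haux := Submodule.subset_span (by simp)
  have m4 : Eaux 0 0 - Eaux 2 2 ∈ haux := Submodule.subset_span (by simp)
  -- bracket computations
  have bcalc : ∀ (p q r s : Fin 3) (A : Matrix (Fin 3) (Fin 3) ℝ),
      (Eaux p q * Eaux r s - Eaux r s * Eaux p q = A) → ⁅Eaux p q, Eaux r s⁆ = A := by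
    intro p q r s A hA; rw [Ring.lie_def, hA]
  have b11 : ⁅Eaux 0 1, Eaux 0 1⁆ = 0 := lie_self _
  have b12 : ⁅Eaux 0 1, Eaux 1 0⁆ = Eaux 0 0 - Eaux 1 1 := by
    rw [hEdef]; simp (config := {decide := true}) [Ring.lie_def,
      Matrix.single_mul_single_same, Matrix.single_mul_single_of_ne]
  have b13 : ⁅Eaux 0 1, Eaux 0 2⁆ = 0 := by
    rw [hEdef]; simp (config := {decide := true}) [Ring.lie_def,
      Matrix.single_mul_single_same, Matrix.single_mul_single_of_ne]
  have b14 : ⁅Eaux 0 1, Eaux 2 0⁆ = -Eaux 2 1 := by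
    rw [hEdef]; simp (config := {decide := true}) [Ring.lie_def,
      Matrix.single_mul_single_same, Matrix.single_mul_single_of_ne]
  have b15 : ⁅Eaux 0 1, Eaux 1 2⁆ = Eaux 0 2 := by
    rw [hEdef]; simp (config := {decide := true}) [Ring.lie_def,
      Matrix.single_mul_single_same, Matrix.single_mul_single_of_ne]
  have b16 : ⁅Eaux 0 1, Eaux 2 1⁆ = 0 := by
    rw [hEdef]; simp (config := {decide := true}) [Ring.lie_def,
      Matrix.single_mul_single_same, Matrix.single_mul_single_of_ne]
  have b21 : ⁅Eaux 0 2, Eaux 0 1⁆ = 0 := by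
    rw [hEdef]; simp (config := {decide := true}) [Ring.lie_def,
      Matrix.single_mul_single_same, Matrix.single_mul_single_of_ne]
  have b22 : ⁅Eaux 0 2, Eaux 1 0⁆ = -Eaux 1 2 := by
    rw [hEdef]; simp (config := {decide := true}) [Ring.lie_def,
      Matrix.single_mul_single_same, Matrix.single_mul_single_of_ne]
  have b23 : ⁅Eaux 0 2, Eaux 0 2⁆ = 0 := lie_self _
  have b24 : ⁅Eaux 0 2, Eaux 2 0⁆ = Eaux 0 0 - Eaux 2 2 := by
    rw [hEdef]; simp (config := {decide := true}) [Ring.lie_def,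
      Matrix.single_mul_single_same, Matrix.single_mul_single_of_ne]
  have b25 : ⁅Eaux 0 2, Eaux 1 2⁆ = 0 := by
    rw [hEdef]; simp (config := {decide := true}) [Ring.lie_def,
      Matrix.single_mul_single_same, Matrix.single_mul_single_of_ne]
  have b26 : ⁅Eaux 0 2, Eaux 2 1⁆ = Eaux 0 1 := by
    rw [hEdef]; simp (config := {decide := true}) [Ring.lie_def,
      Matrix.single_mul_single_same, Matrix.single_mul_single_of_ne]
  have b31 : ⁅Eaux 1 2, Eaux 0 1⁆ = -Eaux 0 2 := by
    rw [hEdef]; simp (config := {decide := true}) [Ring.lie_def,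
      Matrix.single_mul_single_same, Matrix.single_mul_single_of_ne]
  have b32 : ⁅Eaux 1 2, Eaux 1 0⁆ = 0 := by
    rw [hEdef]; simp (config := {decide := true}) [Ring.lie_def,
      Matrix.single_mul_single_same, Matrix.single_mul_single_of_ne]
  have b33 : ⁅Eaux 1 2, Eaux 0 2⁆ = 0 := by
    rw [hEdef]; simp (config := {decide := true}) [Ring.lie_def,
      Matrix.single_mul_single_same, Matrix.single_mul_single_of_ne]
  have b34 : ⁅Eaux 1 2, Eaux 2 0⁆ = Eaux 1 0 := by
    rw [hEdef]; simp (config := {decide := true}) [Ring.lie_def,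
      Matrix.single_mul_single_same, Matrix.single_mul_single_of_ne]
  have b35 : ⁅Eaux 1 2, Eaux 1 2⁆ = 0 := lie_self _
  have b36 : ⁅Eaux 1 2, Eaux 2 1⁆ = Eaux 1 1 - Eaux 2 2 := by
    rw [hEdef]; simp (config := {decide := true}) [Ring.lie_def,
      Matrix.single_mul_single_same, Matrix.single_mul_single_of_ne]
  have b41 : ⁅Eaux 0 0 - Eaux 2 2, Eaux 0 1⁆ = Eaux 0 1 := by
    rw [hEdef]; simp (config := {decide := true}) [Ring.lie_def, sub_mul, mul_sub,
      Matrix.single_mul_single_same, Matrix.single_mul_single_of_ne]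
  have b42 : ⁅Eaux 0 0 - Eaux 2 2, Eaux 1 0⁆ = -Eaux 1 0 := by
    rw [hEdef]; simp (config := {decide := true}) [Ring.lie_def, sub_mul, mul_sub,
      Matrix.single_mul_single_same, Matrix.single_mul_single_of_ne]
  have b43 : ⁅Eaux 0 0 - Eaux 2 2, Eaux 0 2⁆ = Eaux 0 2 + Eaux 0 2 := by
    rw [hEdef]; simp (config := {decide := true}) [Ring.lie_def, sub_mul, mul_sub,
      Matrix.single_mul_single_same, Matrix.single_mul_single_of_ne]
    try abel
  have b44 : ⁅Eaux 0 0 - Eaux 2 2, Eaux 2 0⁆ = -(Eaux 2 0 + Eaux 2 0) := by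
    rw [hEdef]; simp (config := {decide := true}) [Ring.lie_def, sub_mul, mul_sub,
      Matrix.single_mul_single_same, Matrix.single_mul_single_of_ne]
    try abel
  have b45 : ⁅Eaux 0 0 - Eaux 2 2, Eaux 1 2⁆ = Eaux 1 2 := by
    rw [hEdef]; simp (config := {decide := true}) [Ring.lie_def, sub_mul, mul_sub,
      Matrix.single_mul_single_same, Matrix.single_mul_single_of_ne]
  have b46 : ⁅Eaux 0 0 - Eaux 2 2, Eaux 2 1⁆ = -Eaux 2 1 := by
    rw [hEdef]; simp (config := {decide := true}) [Ring.lie_def, sub_mul, mul_sub,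
      Matrix.single_mul_single_same, Matrix.single_mul_single_of_ne]
  -- the key expansion
  have step : ∀ (x : Matrix (Fin 3) (Fin 3) ℝ)
      (ξ η : Module.Dual ℝ (Matrix (Fin 3) (Fin 3) ℝ)),
      S.pair ξ η (S.bv x πaux) =
        (ξ ⁅x, Eaux 0 1⁆ * η (Eaux 1 0) - ξ (Eaux 1 0) * η ⁅x, Eaux 0 1⁆)
      + (ξ (Eaux 0 1) * η ⁅x, Eaux 1 0⁆ - ξ ⁅x, Eaux 1 0⁆ * η (Eaux 0 1))
      + (ξ ⁅x, Eaux 0 2⁆ * η (Eaux 2 0) - ξ (Eaux 2 0) * η ⁅x, Eaux 0 2⁆)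
      + (ξ (Eaux 0 2) * η ⁅x, Eaux 2 0⁆ - ξ ⁅x, Eaux 2 0⁆ * η (Eaux 0 2))
      + (ξ ⁅x, Eaux 1 2⁆ * η (Eaux 2 1) - ξ (Eaux 2 1) * η ⁅x, Eaux 1 2⁆)
      + (ξ (Eaux 1 2) * η ⁅x, Eaux 2 1⁆ - ξ ⁅x, Eaux 2 1⁆ * η (Eaux 1 2)) := by
    intro x ξ η
    rw [hπ]
    simp only [map_add, S.bv_wedge2, S.pair_wedge]
    ring
  refine ⟨?_, ?_⟩
  · intro ξ η hξ hη x hx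
    have hξ1 := hξ _ m1; have hξ2 := hξ _ m2; have hξ3 := hξ _ m3; have hξ4 := hξ _ m4
    have hη1 := hη _ m1; have hη2 := hη _ m2; have hη3 := hη _ m3; have hη4 := hη _ m4
    induction hx using Submodule.span_induction with
    | mem x hx =>
      simp only [Set.mem_insert_iff, Set.mem_singleton_iff] at hx
      rcases hx with rfl | rfl | rfl | rfl
      · rw [step, b11, b12, b13, b14, b15, b16]
        simp [hξ1, hξ2, hξ3, hη1, hη2, hη3]
      · rw [step, b21, b22, b23, b24, b25, b26]
        simp [hξ1, hξ2, hξ3, hξ4, hη1, hη2, hη3, hη4]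
      · rw [step, b31, b32, b33, b34, b35, b36]
        simp [hξ1, hξ2, hξ3, hη1, hη2, hη3]
        try ring
      · rw [step, b41, b42, b43, b44, b45, b46]
        simp [hξ1, hξ2, hξ3, hη1, hη2, hη3]
        try ring
    | zero => simp
    | add y z _ _ hy hz => rw [show S.bv (y + z) = S.bv y + S.bv z from map_add _ _ _, LinearMap.add_apply, map_add, hy, hz, add_zero]
    | smul a y _ hy => rw [show S.bv (a • y) = a • S.bv y from map_smul _ _ _, LinearMap.smul_apply, map_smul, hy, smul_zero]
  · refine ⟨entryDual 0 1, entryDual 1 1, ?_, Eaux 0 1, m1, ?_⟩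
    · intro x hx
      induction hx using Submodule.span_induction with
      | mem x hx =>
        simp only [Set.mem_insert_iff, Set.mem_singleton_iff] at hx
        rcases hx with rfl | rfl | rfl | rfl <;>
          · rw [hEdef]; simp [show ∀ i j A, entryDual i j A = A i j from fun _ _ _ => rfl, Matrix.single_apply]
      | zero => simp
      | add y z _ _ hy hz => rw [map_add, hy, hz, add_zero]
      | smul a y _ hy => rw [map_smul, hy, smul_zero]
    · rw [step, b11, b12, b13, b14, b15, b16, hEdef]
      simp [show ∀ i j A, entryDual i j A = A i j from fun _ _ _ => rfl, Matrix.single_apply]
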